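/- For p > 1, the quantity π_p defined as 2∫₀¹ (1 - s^p)^{-1/p} ds equals 2π/(p·sin(π/p)). -/

import Mathlib

open Real MeasureTheory

open intervalIntegral Set in
lemma realBeta_aux {a : ℝ} (h0 : 0 < a) (h1 : a < 1) :
    IntervalIntegrable (fun x : ℝ => x ^ (a - 1) * (1 - x) ^ (-a)) volume 0 1 ∧
    (∫ x in (0:ℝ)..1, x ^ (a - 1) * (1 - x) ^ (-a)) = Real.pi / Real.sin (Real.pi * a) := by
  have hu : 0 < Complex.re (a : ℂ) := by simpa using h0
  have hv : 0 < Complex.re (1 - (a : ℂ)) := by simpa using h1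
  have hptwise : ∀ x : ℝ, x ∈ Set.Ioc (0:ℝ) 1 →
      (x : ℂ) ^ ((a : ℂ) - 1) * (1 - (x : ℂ)) ^ ((1 - (a : ℂ)) - 1)
        = ((x ^ (a - 1) * (1 - x) ^ (-a) : ℝ) : ℂ) := by
    intro x hx
    have hx0 : (0:ℝ) ≤ x := hx.1.le
    have hx1 : (0:ℝ) ≤ 1 - x := by linarith [hx.2]
    rw [show (1 - (a:ℂ) - 1) = ((-a : ℝ) : ℂ) by push_cast; ring,
      show ((a:ℂ) - 1) = ((a - 1 : ℝ) : ℂ) by push_cast; ring,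
      Complex.ofReal_mul, Complex.ofReal_cpow hx0, Complex.ofReal_cpow hx1]
    push_cast
    ring_nf
  have hconv := Complex.betaIntegral_convergent hu hv
  -- real integrability
  have hint : IntervalIntegrable (fun x : ℝ => x ^ (a - 1) * (1 - x) ^ (-a)) volume 0 1 := by
    have h1' : IntegrableOn (fun x : ℝ =>
        (x : ℂ) ^ ((a : ℂ) - 1) * (1 - (x : ℂ)) ^ ((1 - (a : ℂ)) - 1)) (Set.Ioc 0 1) volume :=
      hconv.1
    have h2' : IntegrableOn (fun x : ℝ => ((x ^ (a - 1) * (1 - x) ^ (-a) : ℝ) : ℂ))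
        (Set.Ioc 0 1) volume := h1'.congr_fun hptwise measurableSet_Ioc
    have h3' : IntegrableOn (fun x : ℝ => x ^ (a - 1) * (1 - x) ^ (-a)) (Set.Ioc 0 1) volume := by
      have := h2'.re
      simp at this
      exact this
    constructor
    · simpa using h3'
    · simp [Set.Ioc_eq_empty (by norm_num : ¬ (1:ℝ) < 0), integrableOn_empty]
  refine ⟨hint, ?_⟩
  -- the complex beta integral value
  have hB : Complex.betaIntegral (a : ℂ) (1 - (a : ℂ)) = (Real.pi : ℂ) / Complex.sin (Real.pi * a) := by
    have := Complex.Gamma_mul_Gamma_eq_betaIntegral hu hv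
    rw [add_sub_cancel, Complex.Gamma_one, one_mul] at this
    rw [← this, Complex.Gamma_mul_Gamma_one_sub]
  have hcast : Complex.betaIntegral (a : ℂ) (1 - (a : ℂ))
      = ((∫ x in (0:ℝ)..1, x ^ (a - 1) * (1 - x) ^ (-a) : ℝ) : ℂ) := by
    rw [Complex.betaIntegral, ← intervalIntegral.integral_ofReal]
    apply intervalIntegral.integral_congr_ae
    filter_upwards with x hx
    rw [Set.uIoc_of_le (by norm_num : (0:ℝ) ≤ 1)] at hx
    exact hptwise x hx
  have hsin : Real.sin (Real.pi * a) ≠ 0 := by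
    have : 0 < Real.sin (Real.pi * a) := Real.sin_pos_of_pos_of_lt_pi
      (by positivity) (by nlinarith [Real.pi_pos])
    exact this.ne'
  have : ((∫ x in (0:ℝ)..1, x ^ (a - 1) * (1 - x) ^ (-a) : ℝ) : ℂ)
      = ((Real.pi / Real.sin (Real.pi * a) : ℝ) : ℂ) := by
    rw [← hcast, hB]
    push_cast [Complex.ofReal_sin]
    norm_num
  exact_mod_cast this

theorem pi_p_eq (p : ℝ) (hp : 1 < p) :
    2 * ∫ s in (0:ℝ)..1, (1 - s ^ p) ^ (-1/p) =
      2 * Real.pi / (p * Real.sin (Real.pi / p)) := by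
  have hp0 : (0:ℝ) < p := lt_trans one_pos hp
  set a : ℝ := 1 / p with ha
  have ha0 : 0 < a := by positivity
  have ha1 : a < 1 := by rw [ha, div_lt_one hp0]; exact hp
  have hpa : p * a = 1 := by rw [ha, mul_one_div_cancel hp0.ne']
  obtain ⟨hint, hval⟩ := realBeta_aux ha0 ha1
  set g : ℝ → ℝ := fun u => u ^ (a - 1) * (1 - u) ^ (-a) with hg
  set f : ℝ → ℝ := fun x => x ^ p with hf
  -- key pointwise identity on (0, 1]
  have hkey : ∀ x : ℝ, x ∈ Set.Ioc (0:ℝ) 1 →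
      (p * x ^ (p - 1)) • (g ∘ f) x = p * (1 - x ^ p) ^ (-a) := by
    intro x hx
    have hx0 : 0 < x := hx.1
    have hfx : (x ^ p) ^ (a - 1) = x ^ (1 - p) := by
      rw [← Real.rpow_mul hx0.le]
      congr 1
      rw [mul_sub, hpa, mul_one]
    simp only [hg, hf, Function.comp, smul_eq_mul, hfx]
    rw [show p * x ^ (p - 1) * (x ^ (1 - p) * (1 - x ^ p) ^ (-a))
        = p * (x ^ (p - 1) * x ^ (1 - p)) * (1 - x ^ p) ^ (-a) by ring,
      ← Real.rpow_add hx0]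
    norm_num
  -- integrability of the substituted integrand
  have hbound : IntervalIntegrable (fun x : ℝ => (1 - x) ^ (-a)) volume 0 1 := by
    have := (intervalIntegral.intervalIntegrable_rpow' (show (-1:ℝ) < -a by linarith)
      (a := 0) (b := 1)).comp_sub_left 1
    simpa using this.symm
  have hmeas : AEStronglyMeasurable (fun x : ℝ => (1 - x ^ p) ^ (-a))
      (volume.restrict (Set.Ioc (0:ℝ) 1)) := by
    apply Measurable.aestronglyMeasurable
    measurability
  have hI1 : IntegrableOn (fun x : ℝ => (1 - x ^ p) ^ (-a)) (Set.Ioc 0 1) volume := by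
    refine Integrable.mono (hbound.1) hmeas ?_
    filter_upwards [ae_restrict_mem measurableSet_Ioc] with x hx
    have hx0 : 0 < x := hx.1
    have hx1 : x ≤ 1 := hx.2
    have hxp : x ^ p ≤ x := by
      have := Real.rpow_le_rpow_of_exponent_ge hx0 hx1 hp.le
      simpa using this
    have hxp1 : x ^ p ≤ 1 := Real.rpow_le_one hx0.le hx1 hp0.le
    have h1 : (0:ℝ) ≤ 1 - x ^ p := by linarith
    have h2 : (0:ℝ) ≤ 1 - x := by linarith
    rw [Real.norm_eq_abs, abs_of_nonneg (Real.rpow_nonneg h1 _), Real.norm_eq_abs,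
      abs_of_nonneg (Real.rpow_nonneg h2 _)]
    rcases eq_or_lt_of_le h2 with h2' | h2'
    · have : x = 1 := by linarith
      subst this
      simp only [show (1:ℝ) ^ p = 1 by simp, sub_self]
      rw [Real.zero_rpow (by linarith : -a ≠ 0)]
    · exact Real.rpow_le_rpow_of_nonpos h2' (by linarith) (by linarith)
  -- the substitution
  have hsub : (∫ x in (0:ℝ)..1, (p * x ^ (p - 1)) • (g ∘ f) x) = ∫ u in (0:ℝ)..1, g u := by
    have h01 : (0:ℝ) ≤ 1 := by norm_num
    have himg : f '' Set.Ioo 0 1 ⊆ Set.Ioo 0 1 := by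
      rintro _ ⟨x, hx, rfl⟩
      exact ⟨Real.rpow_pos_of_pos hx.1 p, Real.rpow_lt_one hx.1.le hx.2 hp0⟩
    have himg' : f '' Set.uIcc 0 1 ⊆ Set.Icc 0 1 := by
      rintro _ ⟨x, hx, rfl⟩
      rw [Set.uIcc_of_le h01] at hx
      exact ⟨Real.rpow_nonneg hx.1 p, Real.rpow_le_one hx.1 hx.2 hp0.le⟩
    have := intervalIntegral.integral_comp_smul_deriv'''
      (a := 0) (b := 1) (f := f) (f' := fun x => p * x ^ (p - 1)) (g := g)
      ?c1 ?c2 ?c3 ?c4 ?c5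
    · rw [this]
      congr 1
      · simp [hf, Real.zero_rpow hp0.ne']
      · simp [hf]
    case c1 => exact (continuous_id.rpow_const fun _ => Or.inr hp0.le).continuousOn
    case c2 =>
      intro x hx
      simp only [min_def, max_def, h01, if_pos] at hx
      norm_num at hx
      exact ((Real.hasDerivAt_rpow_const (Or.inl hx.1.ne')).hasDerivWithinAt)
    case c3 =>
      refine ContinuousOn.mono ?_ (by simpa [min_def, max_def] using himg)
      intro u hu
      apply ContinuousAt.continuousWithinAt
      apply ContinuousAt.mul
      · exact Real.continuousAt_rpow_const u (a - 1) (Or.inl hu.1.ne')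
      · exact (Real.continuousAt_rpow_const (1 - u) (-a)
          (Or.inl (by linarith [hu.2]))).comp (continuous_const.sub continuous_id).continuousAt
    case c4 =>
      refine IntegrableOn.mono_set ?_ himg'
      rw [integrableOn_Icc_iff_integrableOn_Ioc]
      exact hint.1
    case c5 =>
      rw [Set.uIcc_of_le h01, integrableOn_Icc_iff_integrableOn_Ioc]
      exact MeasureTheory.IntegrableOn.congr_fun (hI1.const_mul p)
        (fun x hx => (hkey x hx).symm) measurableSet_Ioc
  -- rewrite the substituted integral
  have hsub2 : (∫ x in (0:ℝ)..1, (p * x ^ (p - 1)) • (g ∘ f) x)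
      = p * ∫ x in (0:ℝ)..1, (1 - x ^ p) ^ (-a) := by
    rw [← intervalIntegral.integral_const_mul]
    apply intervalIntegral.integral_congr_ae
    filter_upwards with x hx
    rw [Set.uIoc_of_le (by norm_num : (0:ℝ) ≤ 1)] at hx
    exact hkey x hx
  have hmain : p * ∫ x in (0:ℝ)..1, (1 - x ^ p) ^ (-a)
      = Real.pi / Real.sin (Real.pi * a) := by
    rw [← hsub2, hsub, hval]
  have hsin : 0 < Real.sin (Real.pi / p) := Real.sin_pos_of_pos_of_lt_pi
    (by positivity) (by rw [div_lt_iff₀ hp0]; nlinarith [Real.pi_pos])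
  have hsin' : Real.pi * a = Real.pi / p := by rw [ha]; ring
  rw [hsin'] at hmain
  have hexp : (-1 : ℝ)/p = -a := by rw [ha]; ring
  rw [hexp]
  have hI : (∫ x in (0:ℝ)..1, (1 - x ^ p) ^ (-a)) = Real.pi / (p * Real.sin (Real.pi / p)) := by
    rw [eq_div_iff (by positivity)]
    rw [eq_div_iff hsin.ne'] at hmain
    linear_combination hmain
  rw [hI]
  ring
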